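/- Let ψ : ℝ → ℂ be a compactly supported continuous function and u : ℤ → ℂ an absolutely summable sequence of the form u(k) = δ(k) + c(k) − c(k−1) for some c ∈ ℓ^1(ℤ) (equivalently û(ξ) = 1 + (1−e^{-iξ})ĉ(ξ)). Then lim_{n→∞} ‖∑_{k∈ℤ} ψ(2^{-n}(·−k)) u(k) − ψ(2^{-n}·)‖_∞ = 0, where ‖·‖_∞ is the supremum norm on ℝ. -/

import Mathlib

open Complex

set_option maxHeartbeats 1000000

/-- if `u = δ + ∇c` with `c ∈ ℓ¹(ℤ)` and `ψ` is compactly supported and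
continuous, then `‖ψ(2^{-n}·)*u − ψ(2^{-n}·)‖_∞ → 0`. -/
theorem stmt14 (ψ : ℝ → ℂ) (hψc : Continuous ψ) (hψs : HasCompactSupport ψ)
    (u c : ℤ → ℂ) (hc : Summable fun k : ℤ => ‖c k‖)
    (huc : ∀ k : ℤ, u k = (if k = 0 then 1 else 0) + c k - c (k - 1)) :
    ∀ ε : ℝ, 0 < ε → ∃ N : ℕ, ∀ n ≥ N, ∀ x : ℝ,
      ‖(∑' k : ℤ, ψ ((2 : ℝ) ^ (-(n : ℤ)) * (x - (k : ℤ))) * u k) -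
        ψ ((2 : ℝ) ^ (-(n : ℤ)) * x)‖ < ε := by
  intro ε hε
  obtain ⟨M, hM⟩ := hψs.exists_bound_of_continuous hψc
  have hMpos : ∀ x, ‖ψ x‖ ≤ max M 1 := fun x => (hM x).trans (le_max_left _ _)
  set M' := max M 1 with hM'
  have hM'pos : (0:ℝ) < M' := lt_of_lt_of_le one_pos (le_max_right _ _)
  set C := ∑' k : ℤ, ‖c k‖ with hC
  have hC0 : 0 ≤ C := tsum_nonneg fun k => norm_nonneg _
  set ε' := ε / (2 * (C + 1)) with hε'
  have hε'pos : 0 < ε' := by positivity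
  -- uniform continuity
  have huni := Metric.uniformContinuous_iff.mp
    (hψs.uniformContinuous_of_continuous hψc) ε' hε'pos
  obtain ⟨δ, hδpos, hδ⟩ := huni
  -- choose N with (1/2)^N < δ
  obtain ⟨N, hN⟩ := exists_pow_lt_of_lt_one hδpos (by norm_num : (1:ℝ)/2 < 1)
  refine ⟨N, fun n hn x => ?_⟩
  set r : ℝ := (2 : ℝ) ^ (-(n : ℤ)) with hr
  have hrpos : 0 < r := by positivity
  have hrδ : r < δ := by
    have h1 : r = (1/2 : ℝ) ^ n := by
      rw [hr, zpow_neg, zpow_natCast]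
      simp [one_div, inv_pow]
    have h2 : ((1:ℝ)/2) ^ n ≤ ((1:ℝ)/2) ^ N :=
      pow_le_pow_of_le_one (by norm_num) (by norm_num) hn
    rw [h1]; exact lt_of_le_of_lt h2 hN
  set A : ℤ → ℝ := fun k => r * (x - (k : ℤ)) with hA
  -- summabilities
  have hsc : Summable fun k : ℤ => ψ (A k) * c k := by
    apply Summable.of_norm_bounded (hc.mul_left M')
    intro k
    rw [norm_mul]
    exact mul_le_mul_of_nonneg_right (hMpos _) (norm_nonneg _)
  have hc' : Summable fun k : ℤ => ‖c (k - 1)‖ :=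
    (Equiv.subRight (1:ℤ)).summable_iff.mpr hc
  have hsc' : Summable fun k : ℤ => ψ (A k) * c (k - 1) := by
    apply Summable.of_norm_bounded (hc'.mul_left M')
    intro k
    rw [norm_mul]
    exact mul_le_mul_of_nonneg_right (hMpos _) (norm_nonneg _)
  have hsd : Summable fun k : ℤ => ψ (A k) * (if k = 0 then (1:ℂ) else 0) := by
    apply summable_of_ne_finset_zero (s := {0})
    intro k hk
    simp at hk
    simp [hk]
  -- split the tsum
  have hsplit : (∑' k : ℤ, ψ (A k) * u k)
      = (∑' k : ℤ, ψ (A k) * (if k = 0 then (1:ℂ) else 0))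
        + ((∑' k : ℤ, ψ (A k) * c k) - (∑' k : ℤ, ψ (A k) * c (k - 1))) := by
    rw [← Summable.tsum_sub hsc hsc', ← Summable.tsum_add hsd (hsc.sub hsc')]
    congr 1; funext k
    rw [huc k]; ring
  have hdelta : (∑' k : ℤ, ψ (A k) * (if k = 0 then (1:ℂ) else 0)) = ψ (r * x) := by
    rw [tsum_eq_single 0 (by intro k hk; simp [hk])]
    simp [hA]
  -- shift
  have hshift : (∑' k : ℤ, ψ (A k) * c (k - 1)) = ∑' k : ℤ, ψ (A (k + 1)) * c k := by
    rw [← (Equiv.addRight (1:ℤ)).tsum_eq (fun k => ψ (A k) * c (k - 1))]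
    simp
  have hdiff : (∑' k : ℤ, ψ (A k) * c k) - (∑' k : ℤ, ψ (A k) * c (k - 1))
      = ∑' k : ℤ, (ψ (A k) - ψ (A (k + 1))) * c k := by
    rw [hshift, ← Summable.tsum_sub hsc]
    · congr 1; funext k; ring
    · apply Summable.of_norm_bounded (hc.mul_left M')
      intro k
      rw [norm_mul]
      exact mul_le_mul_of_nonneg_right (hMpos _) (norm_nonneg _)
  rw [hsplit, hdelta, hdiff]
  have key : ‖∑' k : ℤ, (ψ (A k) - ψ (A (k + 1))) * c k‖ ≤ ε' * C := by
    have hsum : Summable fun k : ℤ => ‖(ψ (A k) - ψ (A (k + 1))) * c k‖ := by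
      apply Summable.of_nonneg_of_le (fun k => norm_nonneg _) (fun k => ?_)
        (hc.mul_left (2 * M'))
      rw [norm_mul]
      refine mul_le_mul_of_nonneg_right ?_ (norm_nonneg _)
      calc ‖ψ (A k) - ψ (A (k+1))‖ ≤ ‖ψ (A k)‖ + ‖ψ (A (k+1))‖ := norm_sub_le _ _
        _ ≤ M' + M' := add_le_add (hMpos _) (hMpos _)
        _ = 2 * M' := by ring
    calc ‖∑' k : ℤ, (ψ (A k) - ψ (A (k + 1))) * c k‖
        ≤ ∑' k : ℤ, ‖(ψ (A k) - ψ (A (k + 1))) * c k‖ := norm_tsum_le_tsum_norm hsum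
      _ ≤ ∑' k : ℤ, ε' * ‖c k‖ := by
          apply Summable.tsum_le_tsum _ hsum (hc.mul_left ε')
          intro k
          rw [norm_mul]
          refine mul_le_mul_of_nonneg_right ?_ (norm_nonneg _)
          have hdist : dist (A k) (A (k+1)) < δ := by
            have : A k - A (k + 1) = r := by
              rw [hA]; push_cast; ring
            rw [Real.dist_eq, this, abs_of_pos hrpos]
            exact hrδ
          exact le_of_lt (dist_eq_norm (ψ (A k)) (ψ (A (k + 1))) ▸ hδ hdist)
      _ = ε' * C := tsum_mul_left
  have : ε' * C < ε := by
    have h1 : ε' * C ≤ ε' * (C + 1) := by nlinarith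
    have h2 : ε' * (C + 1) = ε / 2 := by
      rw [hε']; field_simp
    linarith
  calc ‖ψ (r * x) + (∑' k : ℤ, (ψ (A k) - ψ (A (k + 1))) * c k) - ψ (r * x)‖
      = ‖∑' k : ℤ, (ψ (A k) - ψ (A (k + 1))) * c k‖ := by congr 1; ring
    _ ≤ ε' * C := key
    _ < ε := this
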